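/- Let ABC be a nondegenerate triangle in the Euclidean plane with circumcenter O, circumradius R, orthocenter H, and nine-point center N = midpoint(O,H). Then the triangle is obtuse (one of the angles ∠BAC, ∠ABC, ∠BCA is strictly greater than π/2) if and only if dist(O,N) > R/2. -/

import Mathlib

open EuclideanGeometry Real

open RealInnerProductSpace in
private theorem my_angle_obtuse_iff {V : Type*} [NormedAddCommGroup V] [InnerProductSpace ℝ V]
    {x y : V} (hx : x ≠ 0) (hy : y ≠ 0) :
    π / 2 < InnerProductGeometry.angle x y ↔ ⟪x, y⟫ < 0 := by
  have hnorm : 0 < ‖x‖ * ‖y‖ := mul_pos (norm_pos_iff.mpr hx) (norm_pos_iff.mpr hy)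
  constructor
  · intro hlt
    have hc : Real.cos (InnerProductGeometry.angle x y) < 0 :=
      Real.cos_neg_of_pi_div_two_lt_of_lt hlt
        (lt_of_le_of_lt (InnerProductGeometry.angle_le_pi x y) (by linarith [Real.pi_pos]))
    rw [InnerProductGeometry.cos_angle] at hc
    rcases div_neg_iff.mp hc with ⟨_, h2⟩ | ⟨h1, _⟩
    · linarith
    · exact h1
  · intro hneg
    by_contra hle
    push_neg at hle
    have hc : 0 ≤ Real.cos (InnerProductGeometry.angle x y) :=
      Real.cos_nonneg_of_mem_Icc ⟨by linarith [InnerProductGeometry.angle_nonneg x y,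
        Real.pi_pos], hle⟩
    rw [InnerProductGeometry.cos_angle] at hc
    have : (⟪x, y⟫ : ℝ) / (‖x‖ * ‖y‖) < 0 := div_neg_of_neg_of_pos hneg hnorm
    linarith

open RealInnerProductSpace in
private theorem my_gram_zero (a b c : EuclideanSpace ℝ (Fin 2)) {r : ℝ}
    (ha : ⟪a, a⟫ = r) (hb : ⟪b, b⟫ = r) (hc : ⟪c, c⟫ = r) :
    r * (r ^ 2 - ⟪a, b⟫ ^ 2 - ⟪b, c⟫ ^ 2 - ⟪c, a⟫ ^ 2) + 2 * ⟪a, b⟫ * ⟪b, c⟫ * ⟪c, a⟫ = 0 := by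
  have hni : ¬ LinearIndependent ℝ ![a, b, c] := by
    intro hli
    have h1 := hli.fintype_card_le_finrank
    simp [finrank_euclideanSpace_fin] at h1
  obtain ⟨g, hg, i, hgi⟩ := Fintype.not_linearIndependent_iff.mp hni
  simp only [Fin.sum_univ_three, Matrix.cons_val_zero, Matrix.cons_val_one, Matrix.head_cons,
    Matrix.cons_val_two, Matrix.tail_cons] at hg
  have inner_eq : ∀ z : EuclideanSpace ℝ (Fin 2),
      ⟪g 0 • a + g 1 • b + g 2 • c, z⟫ = 0 := by
    intro z; rw [hg]; exact inner_zero_left z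
  have e1 := inner_eq a
  have e2 := inner_eq b
  have e3 := inner_eq c
  simp only [inner_add_left, real_inner_smul_left] at e1 e2 e3
  rw [ha, real_inner_comm a b] at e1
  rw [hb, real_inner_comm b c] at e2
  rw [hc, real_inner_comm c a] at e3
  set u := (⟪a, b⟫ : ℝ)
  set v := (⟪b, c⟫ : ℝ)
  set w := (⟪c, a⟫ : ℝ)
  fin_cases i
  · have key : g 0 * (r * (r ^ 2 - u ^ 2 - v ^ 2 - w ^ 2) + 2 * u * v * w) = 0 := by
      linear_combination (r ^ 2 - v ^ 2) * e1 + (v * w - u * r) * e2 + (u * v - w * r) * e3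
    rcases mul_eq_zero.mp key with h0 | h0
    · exact absurd h0 hgi
    · exact h0
  · have key : g 1 * (r * (r ^ 2 - u ^ 2 - v ^ 2 - w ^ 2) + 2 * u * v * w) = 0 := by
      linear_combination (w * v - u * r) * e1 + (r ^ 2 - w ^ 2) * e2 + (u * w - v * r) * e3
    rcases mul_eq_zero.mp key with h0 | h0
    · exact absurd h0 hgi
    · exact h0
  · have key : g 2 * (r * (r ^ 2 - u ^ 2 - v ^ 2 - w ^ 2) + 2 * u * v * w) = 0 := by
      linear_combination (u * v - w * r) * e1 + (u * w - v * r) * e2 + (r ^ 2 - u ^ 2) * e3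
    rcases mul_eq_zero.mp key with h0 | h0
    · exact absurd h0 hgi
    · exact h0

open RealInnerProductSpace in
/-- A nondegenerate triangle is obtuse if and only if the distance between its circumcenter
and its nine-point center is strictly greater than half the circumradius. -/
theorem obtuse_iff_dist_circumcenter_ninePointCenter_gt
    (A B C : EuclideanSpace ℝ (Fin 2)) (h : AffineIndependent ℝ ![A, B, C]) :
    let T : Affine.Triangle ℝ (EuclideanSpace ℝ (Fin 2)) := ⟨![A, B, C], h⟩
    let O := T.circumcenter
    let R := T.circumradius
    let H := T.orthocenter
    let N := midpoint ℝ O H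
    (π / 2 < ∠ B A C ∨ π / 2 < ∠ A B C ∨ π / 2 < ∠ B C A) ↔ R / 2 < dist O N := by
  intro T O R H N
  have hA : T.points 0 = A := rfl
  have hB : T.points 1 = B := rfl
  have hC : T.points 2 = C := rfl
  set a := A -ᵥ O with ha_def
  set b := B -ᵥ O with hb_def
  set c := C -ᵥ O with hc_def
  -- norms of circumcenter-to-vertex vectors
  have hnA : ‖a‖ = R := by
    rw [ha_def, ← dist_eq_norm_vsub (EuclideanSpace ℝ (Fin 2))]
    simpa [hA] using T.dist_circumcenter_eq_circumradius 0
  have hnB : ‖b‖ = R := by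
    rw [hb_def, ← dist_eq_norm_vsub (EuclideanSpace ℝ (Fin 2))]
    simpa [hB] using T.dist_circumcenter_eq_circumradius 1
  have hnC : ‖c‖ = R := by
    rw [hc_def, ← dist_eq_norm_vsub (EuclideanSpace ℝ (Fin 2))]
    simpa [hC] using T.dist_circumcenter_eq_circumradius 2
  have hra : ⟪a, a⟫ = R ^ 2 := by rw [real_inner_self_eq_norm_sq, hnA]
  have hrb : ⟪b, b⟫ = R ^ 2 := by rw [real_inner_self_eq_norm_sq, hnB]
  have hrc : ⟪c, c⟫ = R ^ 2 := by rw [real_inner_self_eq_norm_sq, hnC]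
  have hD := my_gram_zero a b c hra hrb hrc
  -- inner product commutations
  have hcomm_ba : ⟪b, a⟫ = ⟪a, b⟫ := real_inner_comm a b
  have hcomm_cb : ⟪c, b⟫ = ⟪b, c⟫ := real_inner_comm b c
  have hcomm_ac : ⟪a, c⟫ = ⟪c, a⟫ := real_inner_comm c a
  -- vsub differences
  have hBA : B -ᵥ A = b - a := (vsub_sub_vsub_cancel_right B A O).symm
  have hCA : C -ᵥ A = c - a := (vsub_sub_vsub_cancel_right C A O).symm
  have hABv : A -ᵥ B = a - b := (vsub_sub_vsub_cancel_right A B O).symm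
  have hCB : C -ᵥ B = c - b := (vsub_sub_vsub_cancel_right C B O).symm
  have hBC : B -ᵥ C = b - c := (vsub_sub_vsub_cancel_right B C O).symm
  have hACv : A -ᵥ C = a - c := (vsub_sub_vsub_cancel_right A C O).symm
  have hP : ⟪B -ᵥ A, C -ᵥ A⟫ = R ^ 2 + ⟪b, c⟫ - ⟪a, b⟫ - ⟪c, a⟫ := by
    rw [hBA, hCA]
    simp only [inner_sub_left, inner_sub_right]
    rw [hra, hcomm_ba, hcomm_ac]
    ring
  have hQ : ⟪A -ᵥ B, C -ᵥ B⟫ = R ^ 2 + ⟪c, a⟫ - ⟪a, b⟫ - ⟪b, c⟫ := by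
    rw [hABv, hCB]
    simp only [inner_sub_left, inner_sub_right]
    rw [hrb, hcomm_ac]
    ring
  have hS : ⟪B -ᵥ C, A -ᵥ C⟫ = R ^ 2 + ⟪a, b⟫ - ⟪b, c⟫ - ⟪c, a⟫ := by
    rw [hBC, hACv]
    simp only [inner_sub_left, inner_sub_right]
    rw [hrc, hcomm_ba]
    ring
  -- distinctness of vertices
  have hABne : A ≠ B := by
    have := h.injective.ne (show (0 : Fin 3) ≠ 1 by decide)
    simpa using this
  have hACne : A ≠ C := by
    have := h.injective.ne (show (0 : Fin 3) ≠ 2 by decide)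
    simpa using this
  have hBCne : B ≠ C := by
    have := h.injective.ne (show (1 : Fin 3) ≠ 2 by decide)
    simpa using this
  have hxBA : B -ᵥ A ≠ 0 := vsub_ne_zero.mpr hABne.symm
  have hxCA : C -ᵥ A ≠ 0 := vsub_ne_zero.mpr hACne.symm
  have hxAB : A -ᵥ B ≠ 0 := vsub_ne_zero.mpr hABne
  have hxCB : C -ᵥ B ≠ 0 := vsub_ne_zero.mpr hBCne.symm
  have hxBC : B -ᵥ C ≠ 0 := vsub_ne_zero.mpr hBCne
  have hxAC : A -ᵥ C ≠ 0 := vsub_ne_zero.mpr hACne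
  -- non-collinearity
  have hncol : ¬ Collinear ℝ (Set.range ![A, B, C]) := affineIndependent_iff_not_collinear.mp h
  have hdep : ∀ t : ℝ, C -ᵥ A ≠ t • (B -ᵥ A) := by
    intro t heq
    apply hncol
    have hmem : A ∈ Set.range ![A, B, C] := ⟨0, rfl⟩
    rw [collinear_iff_of_mem hmem]
    refine ⟨B -ᵥ A, ?_⟩
    rintro p ⟨i, rfl⟩
    fin_cases i
    · exact ⟨0, by simp⟩
    · exact ⟨1, by simp⟩
    · refine ⟨t, ?_⟩
      show C = t • (B -ᵥ A) +ᵥ A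
      rw [← heq, vsub_vadd]
  have hnx : (0 : ℝ) < ‖B -ᵥ A‖ := norm_pos_iff.mpr hxBA
  have h1 : ⟪B -ᵥ A, C -ᵥ A⟫ < ‖B -ᵥ A‖ * ‖C -ᵥ A‖ := by
    rw [inner_lt_norm_mul_iff_real]
    intro heq
    apply hdep (‖B -ᵥ A‖⁻¹ * ‖C -ᵥ A‖)
    rw [mul_smul, heq, inv_smul_smul₀ hnx.ne']
  have h2 : -⟪B -ᵥ A, C -ᵥ A⟫ < ‖B -ᵥ A‖ * ‖C -ᵥ A‖ := by
    have h2' : ⟪B -ᵥ A, -(C -ᵥ A)⟫ < ‖B -ᵥ A‖ * ‖-(C -ᵥ A)‖ := by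
      rw [inner_lt_norm_mul_iff_real]
      intro heq
      apply hdep (-(‖B -ᵥ A‖⁻¹ * ‖-(C -ᵥ A)‖))
      rw [neg_smul, mul_smul, heq, inv_smul_smul₀ hnx.ne', neg_neg]
    rwa [inner_neg_right, norm_neg] at h2'
  have hxx : ‖B -ᵥ A‖ ^ 2 = 2 * R ^ 2 - 2 * ⟪a, b⟫ := by
    rw [← real_inner_self_eq_norm_sq, hBA]
    simp only [inner_sub_left, inner_sub_right]
    rw [hra, hrb, hcomm_ba]
    ring
  have hyy : ‖C -ᵥ A‖ ^ 2 = 2 * R ^ 2 - 2 * ⟪c, a⟫ := by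
    rw [← real_inner_self_eq_norm_sq, hCA]
    simp only [inner_sub_left, inner_sub_right]
    rw [hra, hrc, hcomm_ac]
    ring
  have hGpos : 0 < (2 * R ^ 2 - 2 * ⟪a, b⟫) * (2 * R ^ 2 - 2 * ⟪c, a⟫) -
      (R ^ 2 + ⟪b, c⟫ - ⟪a, b⟫ - ⟪c, a⟫) ^ 2 := by
    rw [← hxx, ← hyy, ← hP]
    have key : ⟪B -ᵥ A, C -ᵥ A⟫ ^ 2 < (‖B -ᵥ A‖ * ‖C -ᵥ A‖) ^ 2 := sq_lt_sq' (by linarith) h1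
    have hring : (‖B -ᵥ A‖ * ‖C -ᵥ A‖) ^ 2 = ‖B -ᵥ A‖ ^ 2 * ‖C -ᵥ A‖ ^ 2 := by ring
    linarith
  -- the orthocenter vector
  have hs : H -ᵥ O = a + b + c := by
    show T.orthocenter -ᵥ O = a + b + c
    rw [T.orthocenter_eq_smul_vsub_vadd_circumcenter, vadd_vsub]
    have hone : ∑ i ∈ (Finset.univ : Finset (Fin 3)),
        (Finset.univ : Finset (Fin 3)).centroidWeights ℝ i = 1 :=
      (Finset.univ : Finset (Fin 3)).sum_centroidWeights_eq_one_of_nonempty ℝ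
        ⟨0, Finset.mem_univ 0⟩
    rw [Finset.centroid_def,
      Finset.affineCombination_eq_weightedVSubOfPoint_vadd_of_sum_eq_one _ _ _ hone O,
      vadd_vsub, Finset.weightedVSubOfPoint_apply]
    rw [Fin.sum_univ_three]
    simp only [Finset.centroidWeights_apply, hA, hB, hC, Finset.card_univ, Fintype.card_fin]
    rw [← ha_def, ← hb_def, ← hc_def]
    module
  -- distance to the nine-point center
  have hdist : dist O N = ‖a + b + c‖ / 2 := by
    rw [show N = midpoint ℝ O H from rfl, dist_left_midpoint (𝕜 := ℝ), dist_eq_norm_vsub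
      (EuclideanSpace ℝ (Fin 2)), ← neg_vsub_eq_vsub_rev H O, hs, norm_neg]
    rw [Real.norm_ofNat]
    ring
  -- angle characterizations
  have hang1 : (π / 2 < ∠ B A C) ↔ ⟪B -ᵥ A, C -ᵥ A⟫ < 0 := my_angle_obtuse_iff hxBA hxCA
  have hang2 : (π / 2 < ∠ A B C) ↔ ⟪A -ᵥ B, C -ᵥ B⟫ < 0 := my_angle_obtuse_iff hxAB hxCB
  have hang3 : (π / 2 < ∠ B C A) ↔ ⟪B -ᵥ C, A -ᵥ C⟫ < 0 := my_angle_obtuse_iff hxBC hxAC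
  have hRnn : (0 : ℝ) ≤ R := T.circumradius_nonneg
  clear_value a b c
  clear_value N H R O
  have hss : ⟪a + b + c, a + b + c⟫ = 3 * R ^ 2 + 2 * ⟪a, b⟫ + 2 * ⟪b, c⟫ + 2 * ⟪c, a⟫ := by
    simp only [inner_add_left, inner_add_right]
    rw [hra, hrb, hrc, hcomm_ba, hcomm_cb, hcomm_ac]
    ring
  have hns : ‖a + b + c‖ ^ 2 = ⟪a + b + c, a + b + c⟫ := (real_inner_self_eq_norm_sq _).symm
  have hrhs : (R / 2 < dist O N) ↔
      R ^ 2 < 3 * R ^ 2 + 2 * ⟪a, b⟫ + 2 * ⟪b, c⟫ + 2 * ⟪c, a⟫ := by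
    rw [hdist]
    constructor
    · intro hlt
      have hRn : R < ‖a + b + c‖ := by linarith
      have hsq : R ^ 2 < ‖a + b + c‖ ^ 2 := by
        have := pow_lt_pow_left₀ hRn hRnn (n := 2) (by norm_num)
        exact this
      rw [hns, hss] at hsq
      linarith
    · intro hlt
      have hRn : R < ‖a + b + c‖ := by
        by_contra hle
        push_neg at hle
        have hsq : ‖a + b + c‖ ^ 2 ≤ R ^ 2 := pow_le_pow_left₀ (norm_nonneg _) hle 2
        rw [hns, hss] at hsq
        linarith
      linarith
  have hbc0 : (0 : ℝ) ≤ 2 * R ^ 2 + 2 * ⟪b, c⟫ := by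
    have hexp : ⟪b + c, b + c⟫ = 2 * R ^ 2 + 2 * ⟪b, c⟫ := by
      simp only [inner_add_left, inner_add_right]
      rw [hrb, hrc, hcomm_cb]
      ring
    linarith [real_inner_self_nonneg (x := b + c)]
  have hca0 : (0 : ℝ) ≤ 2 * R ^ 2 + 2 * ⟪c, a⟫ := by
    have hexp : ⟪c + a, c + a⟫ = 2 * R ^ 2 + 2 * ⟪c, a⟫ := by
      simp only [inner_add_left, inner_add_right]
      rw [hrc, hra, hcomm_ac]
      ring
    linarith [real_inner_self_nonneg (x := c + a)]
  have hab0 : (0 : ℝ) ≤ 2 * R ^ 2 + 2 * ⟪a, b⟫ := by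
    have hexp : ⟪a + b, a + b⟫ = 2 * R ^ 2 + 2 * ⟪a, b⟫ := by
      simp only [inner_add_left, inner_add_right]
      rw [hra, hrb, hcomm_ba]
      ring
    linarith [real_inner_self_nonneg (x := a + b)]
  have hkey : (R ^ 2 + ⟪b, c⟫ - ⟪a, b⟫ - ⟪c, a⟫) * (R ^ 2 + ⟪c, a⟫ - ⟪a, b⟫ - ⟪b, c⟫) *
      (R ^ 2 + ⟪a, b⟫ - ⟪b, c⟫ - ⟪c, a⟫) =
      -((R ^ 2 + ⟪a, b⟫ + ⟪b, c⟫ + ⟪c, a⟫) *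
        ((2 * R ^ 2 - 2 * ⟪a, b⟫) * (2 * R ^ 2 - 2 * ⟪c, a⟫) -
          (R ^ 2 + ⟪b, c⟫ - ⟪a, b⟫ - ⟪c, a⟫) ^ 2)) := by
    linear_combination 4 * hD
  rw [hang1, hang2, hang3, hP, hQ, hS, hrhs]
  constructor
  · rintro (hx | hx | hx) <;> linarith
  · intro hσ
    by_contra hcon
    push_neg at hcon
    obtain ⟨n1, n2, n3⟩ := hcon
    have hσ' : (0 : ℝ) < R ^ 2 + ⟪a, b⟫ + ⟪b, c⟫ + ⟪c, a⟫ := by linarith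
    have hpos := mul_pos hσ' hGpos
    have hnn := mul_nonneg (mul_nonneg n1 n2) n3
    linarith
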